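/- Let K be a field, n ≥ 1, and let 𝒱' be an affine subspace of M_n(K) with codimension strictly less than n-1. Let C be a nonzero column vector in K^n, and suppose some element of 𝒱' has C as its first column. Then some invertible element of 𝒱' has C as its first column. -/

import Mathlib

open Matrix Module Submodule

section AffineInvertible

variable {K : Type*} [Field K]

variable (K) in
def colm (m : ℕ) : Matrix (Fin (m+1)) (Fin (m+1)) K →ₗ[K] (Fin (m+1) → K) where
  toFun A := fun i => A i 0
  map_add' _ _ := rfl
  map_smul' _ _ := rfl

variable (K) in
def πm (m : ℕ) : Matrix (Fin (m+1)) (Fin (m+1)) K →ₗ[K] Matrix (Fin m) (Fin m) K where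
  toFun A := A.submatrix Fin.succ Fin.succ
  map_add' _ _ := rfl
  map_smul' _ _ := rfl

lemma colm_surj (m : ℕ) : Function.Surjective (colm K m) := fun y =>
  ⟨Matrix.of fun i j => if j = 0 then y i else 0, funext fun i => by show (if (0 : Fin (m+1)) = 0 then y i else 0) = y i; simp⟩

lemma finrank_matrix_fin (m : ℕ) : finrank K (Matrix (Fin m) (Fin m) K) = m * m := by
  rw [Module.finrank_matrix]
  simp

lemma finrank_ker_colm (m : ℕ) :
    finrank K ↥(LinearMap.ker (colm K m)) + (m+1) = (m+1) * (m+1) := by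
  have h := LinearMap.finrank_range_add_finrank_ker (colm K m)
  rw [LinearMap.range_eq_top.mpr (colm_surj m)] at h
  rw [finrank_top, Module.finrank_pi, Fintype.card_fin, finrank_matrix_fin] at h
  omega

variable (K) in
def ρm (m : ℕ) : Matrix (Fin (m+1)) (Fin (m+1)) K →ₗ[K] (Fin m → K) where
  toFun A := fun j => A 0 j.succ
  map_add' _ _ := rfl
  map_smul' _ _ := rfl

lemma finrank_F_le (m : ℕ) :
    finrank K ↥(LinearMap.ker (colm K m) ⊓ LinearMap.ker (πm K m)) ≤ m := by
  set F := LinearMap.ker (colm K m) ⊓ LinearMap.ker (πm K m) with hF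
  have hinj : Function.Injective ((ρm K m).comp F.subtype) := by
    rw [← LinearMap.ker_eq_bot]
    rw [eq_bot_iff]
    rintro ⟨A, hA⟩ hx
    simp only [LinearMap.mem_ker, LinearMap.comp_apply] at hx
    obtain ⟨hZ, hπ⟩ := hA
    replace hZ := LinearMap.mem_ker.mp hZ
    replace hπ := LinearMap.mem_ker.mp hπ
    have : A = 0 := by
      ext i j
      refine Fin.cases ?_ (fun i' => ?_) i <;> refine Fin.cases ?_ (fun j' => ?_) j
      · exact congr_fun hZ 0
      · exact congr_fun hx j'
      · exact congr_fun hZ i'.succ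
      · exact congr_fun (congr_fun hπ i') j'
    exact (Submodule.mem_bot K).mpr (Subtype.ext this)
  have := LinearMap.finrank_le_finrank_of_injective hinj
  rwa [Module.finrank_pi, Fintype.card_fin] at this

lemma map_πm_ker_colm (m : ℕ) :
    Submodule.map (πm K m) (LinearMap.ker (colm K m)) = ⊤ := by
  rw [eq_top_iff]
  intro B _
  refine ⟨Matrix.of fun i j =>
      if hi : i = 0 then 0 else if hj : j = 0 then 0 else B (i.pred hi) (j.pred hj), ?_, ?_⟩
  · show colm K m _ = 0
    funext i
    show (if hi : i = 0 then 0 else if hj : (0 : Fin (m+1)) = 0 then 0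
      else B (i.pred hi) ((0 : Fin (m+1)).pred hj)) = 0
    split <;> simp
  · show (Matrix.of fun i j => if hi : i = 0 then 0 else if hj : j = 0 then 0
        else B (i.pred hi) (j.pred hj)).submatrix Fin.succ Fin.succ = B
    ext i' j'
    simp [Fin.succ_ne_zero]

lemma exists_unit_col {m : ℕ} (w : Fin (m+1) → K) (hw : w ≠ 0) :
    ∃ u : (Matrix (Fin (m+1)) (Fin (m+1)) K)ˣ, ∀ i, (↑u : Matrix (Fin (m+1)) (Fin (m+1)) K) i 0 = w i := by
  obtain ⟨j, hj⟩ : ∃ j, w j ≠ 0 := by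
    by_contra h; push_neg at h; exact hw (funext h)
  set W : Matrix (Fin (m+1)) (Fin (m+1)) K := (1 : Matrix _ _ K).updateCol j w with hW
  have hdetW : W.det = w j := by
    have h1 : Matrix.cramer (1 : Matrix (Fin (m+1)) (Fin (m+1)) K) w j = W.det :=
      Matrix.cramer_apply _ _ _
    rw [Matrix.cramer_one] at h1
    exact h1.symm
  set σ : Equiv.Perm (Fin (m+1)) := Equiv.swap 0 j with hσ
  set S : Matrix (Fin (m+1)) (Fin (m+1)) K := σ.permMatrix K with hS
  set N : Matrix (Fin (m+1)) (Fin (m+1)) K := W * S with hN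
  have hdet : IsUnit N.det := by
    rw [hN, Matrix.det_mul, hdetW, Matrix.det_permutation]
    exact (isUnit_iff_ne_zero.mpr hj).mul ((Equiv.Perm.sign σ).isUnit.map (Int.castRingHom K))
  have hu : IsUnit N := (Matrix.isUnit_iff_isUnit_det N).mpr hdet
  refine ⟨hu.unit, fun i => ?_⟩
  have : (↑hu.unit : Matrix (Fin (m+1)) (Fin (m+1)) K) = N := rfl
  rw [this, hN, Matrix.mul_apply]
  have hcol : ∀ k, S k 0 = if k = j then 1 else 0 := by
    intro k
    have : S k 0 = if σ k = 0 then 1 else 0 := by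
      simp [hS, Equiv.Perm.permMatrix, PEquiv.toMatrix, Equiv.toPEquiv]
    rw [this]
    congr 1
    simp only [eq_iff_iff]
    constructor
    · intro h; have := σ.injective (h.trans (Equiv.swap_apply_right 0 j).symm); exact this
    · intro h; rw [h, hσ]; exact Equiv.swap_apply_right 0 j
  rw [Finset.sum_eq_single j]
  · rw [hcol j, if_pos rfl, mul_one, hW, Matrix.updateCol_self]
  · intro k _ hk; rw [hcol k, if_neg hk, mul_zero]
  · intro h; exact absurd (Finset.mem_univ j) h

/-- Rank-nullity for a submodule and a linear map. -/
lemma rn_submodule {M N : Type*} [AddCommGroup M] [Module K M] [AddCommGroup N] [Module K N]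
    [FiniteDimensional K M] (p : Submodule K M) (f : M →ₗ[K] N) :
    finrank K p = finrank K (p.map f) + finrank K ↥(p ⊓ LinearMap.ker f) := by
  have h := LinearMap.finrank_range_add_finrank_ker (f.comp p.subtype)
  have hr : LinearMap.range (f.comp p.subtype) = p.map f := by
    rw [LinearMap.range_comp, Submodule.range_subtype]
  have hk : LinearMap.ker (f.comp p.subtype) = Submodule.comap p.subtype (p ⊓ LinearMap.ker f) := by
    rw [LinearMap.ker_comp]
    ext x
    simp [x.2]
  have hk2 : finrank K ↥(LinearMap.ker (f.comp p.subtype)) = finrank K ↥(p ⊓ LinearMap.ker f) := by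
    rw [hk]
    exact LinearEquiv.finrank_eq (Submodule.comapSubtypeEquivOfLe inf_le_left)
  rw [hr, hk2] at h
  exact h.symm

/-- Left multiplication by a unit as a linear equivalence. -/
def lmulE {m : Type*} [Fintype m] [DecidableEq m] (u : (Matrix m m K)ˣ) :
    Matrix m m K ≃ₗ[K] Matrix m m K where
  toFun A := ↑u * A
  invFun A := ↑u⁻¹ * A
  map_add' := mul_add _
  map_smul' r A := (Matrix.mul_smul _ r A)
  left_inv A := by show (↑u⁻¹ : Matrix m m K) * ((↑u : Matrix m m K) * A) = A; rw [← Matrix.mul_assoc, Units.inv_mul, one_mul]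
  right_inv A := by show (↑u : Matrix m m K) * ((↑u⁻¹ : Matrix m m K) * A) = A; rw [← Matrix.mul_assoc, Units.mul_inv, one_mul]

lemma finrank_map_lmul {m : Type*} [Fintype m] [DecidableEq m]
    (u : (Matrix m m K)ˣ) (V : Submodule K (Matrix m m K)) :
    finrank K (V.map (lmulE u).toLinearMap) = finrank K V :=
  LinearEquiv.finrank_map_eq (lmulE u) V

lemma core {m : ℕ}
    (IH : ∀ (W : Submodule K (Matrix (Fin m) (Fin m) K)) (Y : Matrix (Fin m) (Fin m) K),
      m ^ 2 - finrank K W ≤ m - 1 → ∃ B, B - Y ∈ W ∧ IsUnit B)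
    (V : Submodule K (Matrix (Fin (m+1)) (Fin (m+1)) K))
    (X M₀ : Matrix (Fin (m+1)) (Fin (m+1)) K) (hM₀ : M₀ - X ∈ V)
    (u : (Matrix (Fin (m+1)) (Fin (m+1)) K)ˣ)
    (hcol : ∀ i, M₀ i 0 = (↑u : Matrix (Fin (m+1)) (Fin (m+1)) K) i 0)
    (hdim : m ^ 2 - finrank K ↥(Submodule.map (πm K m)
        ((Submodule.map (lmulE u⁻¹).toLinearMap V) ⊓ LinearMap.ker (colm K m))) ≤ m - 1) :
    ∃ M, M - X ∈ V ∧ IsUnit M ∧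
      ∀ i, M i 0 = (↑u : Matrix (Fin (m+1)) (Fin (m+1)) K) i 0 := by
  set P : Matrix (Fin (m+1)) (Fin (m+1)) K := ↑u⁻¹ with hP
  set Q : Matrix (Fin (m+1)) (Fin (m+1)) K := ↑u with hQ
  have hPQ : P * Q = 1 := Units.inv_mul u
  have hQP : Q * P = 1 := Units.mul_inv u
  set V' := Submodule.map (lmulE u⁻¹).toLinearMap V with hV'
  set V₀ := V' ⊓ LinearMap.ker (colm K m) with hV₀
  set X' : Matrix (Fin (m+1)) (Fin (m+1)) K := P * M₀ with hX'
  have hX'col : ∀ i, X' i 0 = (1 : Matrix (Fin (m+1)) (Fin (m+1)) K) i 0 := by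
    intro i
    have h1 : X' i 0 = (P * Q) i 0 := by
      rw [hX', Matrix.mul_apply, Matrix.mul_apply]
      exact Finset.sum_congr rfl fun j _ => by rw [hcol j]
    rw [h1, hPQ]
  obtain ⟨B, hBmem, hBunit⟩ := IH (Submodule.map (πm K m) V₀) (πm K m X') hdim
  obtain ⟨A₀, hA₀, hπA₀⟩ := hBmem
  have hA₀Z : ∀ i, A₀ i 0 = 0 := by
    have := LinearMap.mem_ker.mp hA₀.2
    exact fun i => congr_fun this i
  set M' : Matrix (Fin (m+1)) (Fin (m+1)) K := X' + A₀ with hM'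
  have hM'col : ∀ i, M' i 0 = (1 : Matrix (Fin (m+1)) (Fin (m+1)) K) i 0 := by
    intro i
    rw [hM', Matrix.add_apply, hX'col i, hA₀Z i, add_zero]
  have hπM' : πm K m M' = B := by
    rw [hM', map_add, hπA₀]
    abel
  have hM'unit : IsUnit M' := by
    rw [Matrix.isUnit_iff_isUnit_det]
    have hdet : M'.det = B.det := by
      rw [Matrix.det_succ_column_zero]
      rw [Finset.sum_eq_single (0 : Fin (m+1))]
      · rw [hM'col 0, Matrix.one_apply_eq]
        rw [Fin.succAbove_zero]
        have h2 : M'.submatrix Fin.succ Fin.succ = B := hπM'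
        rw [h2]
        simp
      · intro i _ hi
        rw [hM'col i, Matrix.one_apply_ne hi, mul_zero, zero_mul]
      · intro h; exact absurd (Finset.mem_univ _) h
    rw [hdet]
    exact (Matrix.isUnit_iff_isUnit_det B).mp hBunit
  refine ⟨Q * M', ?_, ?_, ?_⟩
  · obtain ⟨A₁, hA₁, hA₁eq⟩ := hA₀.1
    have huA₀ : Q * A₀ = A₁ := by
      rw [← hA₁eq]
      show Q * (P * A₁) = A₁
      rw [← Matrix.mul_assoc, hQP, one_mul]
    have huX' : Q * X' = M₀ := by
      rw [hX', ← Matrix.mul_assoc, hQP, one_mul]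
    have h3 : Q * M' - X = (M₀ - X) + A₁ := by
      rw [hM', Matrix.mul_add, huA₀, huX']
      abel
    rw [h3]
    exact add_mem hM₀ hA₁
  · rw [hQ]
    exact u.isUnit.mul hM'unit
  · intro i
    have h4 : (Q * M') i 0 = (Q * (1 : Matrix (Fin (m+1)) (Fin (m+1)) K)) i 0 := by
      rw [Matrix.mul_apply, Matrix.mul_apply]
      exact Finset.sum_congr rfl fun j _ => by rw [hM'col j]
    rw [h4, mul_one, hQ]

lemma keyL : ∀ (n : ℕ) (V : Submodule K (Matrix (Fin n) (Fin n) K))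
    (X : Matrix (Fin n) (Fin n) K),
    n ^ 2 - finrank K V ≤ n - 1 → ∃ M, M - X ∈ V ∧ IsUnit M := by
  intro n
  induction n with
  | zero =>
    intro V X _
    refine ⟨X, by simp, ?_⟩
    rw [Matrix.isUnit_iff_isUnit_det, Matrix.det_fin_zero]
    exact isUnit_one
  | succ m IH =>
    intro V X hdim0
    have hsq : (m+1) ^ 2 = (m+1) * (m+1) := pow_two (m+1)
    have hexp : (m+1) * (m+1) = m*m + 2*m + 1 := by ring
    have hfle : finrank K V ≤ (m+1) * (m+1) := by
      have := Submodule.finrank_le V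
      rwa [finrank_matrix_fin] at this
    have hf : m * m + m + 1 ≤ finrank K V := by
      rw [hsq] at hdim0
      omega
    have hZrank : finrank K ↥(LinearMap.ker (colm K m)) = m * m + m := by
      have := finrank_ker_colm (K := K) m
      omega
    have hVnleZ : ¬ (V ≤ LinearMap.ker (colm K m)) := by
      intro hle
      have := Submodule.finrank_mono hle
      omega
    -- produce the pivot column and witness
    obtain ⟨v, hv, M₀, hM₀, hM₀col, htag⟩ :
        ∃ v : Fin (m+1) → K, v ≠ 0 ∧ ∃ M₀, M₀ - X ∈ V ∧ (∀ i, M₀ i 0 = v i) ∧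
          (LinearMap.ker (colm K m) ≤ V ∨
            finrank K (Submodule.map (colm K m) V) ≤ m ∨
            ¬(∀ r : Fin (m+1) → K, r 0 = 0 → Matrix.vecMulVec v r ∈ V)) := by
      have generic : ∃ v : Fin (m+1) → K, v ≠ 0 ∧
          ∃ M₀, M₀ - X ∈ V ∧ (∀ i, M₀ i 0 = v i) := by
        by_cases hX : colm K m X = 0
        · obtain ⟨A, hAV, hAZ⟩ : ∃ A, A ∈ V ∧ A ∉ LinearMap.ker (colm K m) := by
            by_contra h
            push_neg at h
            exact hVnleZ fun x hx => h x hx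
          refine ⟨colm K m (X + A), ?_, X + A, by simpa using hAV, fun i => rfl⟩
          rw [map_add, hX, zero_add]
          exact fun h => hAZ (LinearMap.mem_ker.mpr h)
        · exact ⟨colm K m X, hX, X, by simp, fun i => rfl⟩
      by_cases hZV : LinearMap.ker (colm K m) ≤ V
      · obtain ⟨v, hv, M₀, h1, h2⟩ := generic
        exact ⟨v, hv, M₀, h1, h2, Or.inl hZV⟩
      by_cases hcolV : Submodule.map (colm K m) V = ⊤
      · -- case (c)
        have hex : ∃ v : Fin (m+1) → K, v ≠ 0 ∧
            ¬(∀ r : Fin (m+1) → K, r 0 = 0 → Matrix.vecMulVec v r ∈ V) := by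
          by_contra h
          push_neg at h
          apply hZV
          intro z hz
          have hz0 : ∀ i, z i 0 = 0 := fun i => congr_fun (LinearMap.mem_ker.mp hz) i
          have hdecomp : z = ∑ i : Fin (m+1),
              Matrix.vecMulVec (Pi.single i (1:K)) (fun j => z i j) := by
            ext i' j
            simp only [Matrix.sum_apply, Matrix.vecMulVec_apply]
            rw [Finset.sum_eq_single i']
            · simp
            · intro b _ hb
              rw [Pi.single_eq_of_ne (Ne.symm hb), zero_mul]
            · intro hmem; exact absurd (Finset.mem_univ _) hmem
          rw [hdecomp]
          apply Submodule.sum_mem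
          intro i _
          refine h (Pi.single i 1) ?_ (fun j => z i j) (hz0 i)
          intro hps
          have := congr_fun hps i
          simp at this
        obtain ⟨v, hv, hbad⟩ := hex
        have hattain : ∃ M₀, M₀ - X ∈ V ∧ ∀ i, M₀ i 0 = v i := by
          have htriv : (fun i => v i - X i 0) ∈ (⊤ : Submodule K (Fin (m+1) → K)) := trivial
          rw [← hcolV] at htriv
          obtain ⟨w, hwV, hw⟩ := htriv
          refine ⟨X + w, by simpa using hwV, fun i => ?_⟩
          have := congr_fun hw i
          change w i 0 = v i - X i 0 at this
          rw [Matrix.add_apply, this]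
          ring
        obtain ⟨M₀, h1, h2⟩ := hattain
        exact ⟨v, hv, M₀, h1, h2, Or.inr (Or.inr hbad)⟩
      · -- case (b)
        obtain ⟨v, hv, M₀, h1, h2⟩ := generic
        refine ⟨v, hv, M₀, h1, h2, Or.inr (Or.inl ?_)⟩
        have hlt : Submodule.map (colm K m) V < ⊤ := lt_top_iff_ne_top.mpr hcolV
        have := Submodule.finrank_lt (K := K) (V := Fin (m+1) → K) (lt_top_iff_ne_top.mp hlt)
        rw [Module.finrank_pi, Fintype.card_fin] at this
        omega
    obtain ⟨u, hu⟩ := exists_unit_col v hv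
    have hcol : ∀ i, M₀ i 0 = (↑u : Matrix (Fin (m+1)) (Fin (m+1)) K) i 0 := by
      intro i; rw [hM₀col i, hu i]
    -- dimension bound
    set V' := Submodule.map (lmulE u⁻¹).toLinearMap V with hV'def
    have fV' : finrank K V' = finrank K V := LinearEquiv.finrank_map_eq (lmulE u⁻¹) V
    have hdim : m ^ 2 - finrank K
        ↥(Submodule.map (πm K m) (V' ⊓ LinearMap.ker (colm K m))) ≤ m - 1 := by
      rcases Nat.eq_zero_or_pos m with hm | hm
      · subst hm; simp
      have hmle : m ≤ m * m := Nat.le_mul_of_pos_left m hm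
      have rn1 := rn_submodule V' (colm K m)
      have rn2 := rn_submodule (V' ⊓ LinearMap.ker (colm K m)) (πm K m)
      have hassoc : finrank K ↥(V' ⊓ LinearMap.ker (colm K m) ⊓ LinearMap.ker (πm K m))
          = finrank K ↥(V' ⊓ (LinearMap.ker (colm K m) ⊓ LinearMap.ker (πm K m))) := by
        rw [inf_assoc]
      have hFle : finrank K ↥(V' ⊓ (LinearMap.ker (colm K m) ⊓ LinearMap.ker (πm K m))) ≤ m :=
        le_trans (Submodule.finrank_mono inf_le_right) (finrank_F_le m)
      have hsle : finrank K (Submodule.map (colm K m) V') ≤ m + 1 := by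
        have := Submodule.finrank_le (Submodule.map (colm K m) V')
        rwa [Module.finrank_pi, Fintype.card_fin] at this
      have hG : m * m - m + 1 ≤ finrank K
          ↥(Submodule.map (πm K m) (V' ⊓ LinearMap.ker (colm K m))) := by
        rcases htag with hZV | hb | hc
        · -- (a) : ker colm ≤ V ⇒ map is ⊤
          have hZV' : LinearMap.ker (colm K m) ≤ V' := by
            intro z hz
            refine Submodule.mem_map.mpr ⟨(↑u : Matrix (Fin (m+1)) (Fin (m+1)) K) * z, ?_, ?_⟩
            · apply hZV
              rw [LinearMap.mem_ker] at hz ⊢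
              funext i
              show ((↑u : Matrix (Fin (m+1)) (Fin (m+1)) K) * z) i 0 = 0
              rw [Matrix.mul_apply]
              apply Finset.sum_eq_zero
              intro j _
              rw [show z j 0 = 0 from congr_fun hz j, mul_zero]
            · show (↑u⁻¹ : Matrix (Fin (m+1)) (Fin (m+1)) K)
                * ((↑u : Matrix (Fin (m+1)) (Fin (m+1)) K) * z) = z
              rw [← Matrix.mul_assoc, Units.inv_mul, one_mul]
          have htop : Submodule.map (πm K m) (V' ⊓ LinearMap.ker (colm K m)) = ⊤ := by
            rw [eq_top_iff, ← map_πm_ker_colm (K := K) m]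
            exact Submodule.map_mono (le_inf hZV' le_rfl)
          rw [htop, finrank_top, finrank_matrix_fin]
          omega
        · -- (b) : s ≤ m
          have hmapcol : Submodule.map (colm K m) V'
              = Submodule.map (Matrix.mulVecLin (↑u⁻¹ : Matrix (Fin (m+1)) (Fin (m+1)) K))
                  (Submodule.map (colm K m) V) := by
            have hcomp : (colm K m).comp (lmulE u⁻¹).toLinearMap
                = (Matrix.mulVecLin (↑u⁻¹ : Matrix (Fin (m+1)) (Fin (m+1)) K)).comp
                    (colm K m) := by
              apply LinearMap.ext
              intro A
              funext i
              show ((↑u⁻¹ : Matrix (Fin (m+1)) (Fin (m+1)) K) * A) i 0 = _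
              rw [Matrix.mul_apply]
              simp [Matrix.mulVecLin, Matrix.mulVec, dotProduct, colm]
              rfl
            rw [hV'def, ← Submodule.map_comp, hcomp, Submodule.map_comp]
          have hs' : finrank K (Submodule.map (colm K m) V') ≤ m := by
            rw [hmapcol]
            exact le_trans (Submodule.finrank_map_le _ _) hb
          omega
        · -- (c) : g ≤ m - 1
          have hFneq : ¬ ((LinearMap.ker (colm K m) ⊓ LinearMap.ker (πm K m)) ≤ V') := by
            intro hle
            apply hc
            intro r hr
            have hmem : Matrix.vecMulVec (Pi.single 0 (1:K)) r
                ∈ LinearMap.ker (colm K m) ⊓ LinearMap.ker (πm K m) := by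
              refine Submodule.mem_inf.mpr ⟨?_, ?_⟩
              · rw [LinearMap.mem_ker]
                funext i
                show Matrix.vecMulVec (Pi.single 0 (1:K)) r i 0 = 0
                rw [Matrix.vecMulVec_apply, hr, mul_zero]
              · rw [LinearMap.mem_ker]
                ext i j
                show Matrix.vecMulVec (Pi.single 0 (1:K)) r i.succ j.succ = 0
                rw [Matrix.vecMulVec_apply, Pi.single_eq_of_ne (Fin.succ_ne_zero i), zero_mul]
            obtain ⟨A₁, hA₁V, hA₁eq⟩ := hle hmem
            have hA₁eq' : (↑u⁻¹ : Matrix (Fin (m+1)) (Fin (m+1)) K) * A₁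
                = Matrix.vecMulVec (Pi.single 0 (1:K)) r := hA₁eq
            have h5 : A₁ = (↑u : Matrix (Fin (m+1)) (Fin (m+1)) K)
                * Matrix.vecMulVec (Pi.single 0 (1:K)) r := by
              rw [← hA₁eq', ← Matrix.mul_assoc, Units.mul_inv, one_mul]
            have h6 : A₁ = Matrix.vecMulVec v r := by
              rw [h5]
              ext i j
              rw [Matrix.mul_apply]
              simp only [Matrix.vecMulVec_apply]
              rw [Finset.sum_eq_single (0 : Fin (m+1))]
              · rw [Pi.single_eq_same, hu i]; ring
              · intro b _ hb2
                rw [Pi.single_eq_of_ne hb2, zero_mul, mul_zero]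
              · intro hmm; exact absurd (Finset.mem_univ _) hmm
            rw [← h6]
            exact hA₁V
          have hlt : (V' ⊓ (LinearMap.ker (colm K m) ⊓ LinearMap.ker (πm K m)))
              < (LinearMap.ker (colm K m) ⊓ LinearMap.ker (πm K m)) := by
            rcases lt_or_eq_of_le (inf_le_right :
              V' ⊓ (LinearMap.ker (colm K m) ⊓ LinearMap.ker (πm K m))
                ≤ LinearMap.ker (colm K m) ⊓ LinearMap.ker (πm K m)) with h | h
            · exact h
            · exfalso; apply hFneq; rw [← h]; exact inf_le_left
          have h7 := Submodule.finrank_lt_finrank_of_lt hlt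
          have h8 := finrank_F_le (K := K) m
          omega
      rw [pow_two]
      omega
    obtain ⟨M, h1, h2, _⟩ := core IH V X M₀ hM₀ u hcol hdim
    exact ⟨M, h1, h2⟩

end AffineInvertible

theorem affine_subspace_invertible_with_first_column (K : Type*) [Field K] (n : ℕ) (hn : 0 < n)
    (V : Submodule K (Matrix (Fin n) (Fin n) K)) (X : Matrix (Fin n) (Fin n) K)
    (hV : n ^ 2 - Module.finrank K V < n - 1)
    (C : Fin n → K) (hC : C ≠ 0)
    (hex : ∃ M : Matrix (Fin n) (Fin n) K, M - X ∈ V ∧ ∀ i, M i ⟨0, hn⟩ = C i) :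
    ∃ M : Matrix (Fin n) (Fin n) K, M - X ∈ V ∧ IsUnit M ∧ ∀ i, M i ⟨0, hn⟩ = C i := by
  have hn2 : 2 ≤ n := by
    by_contra h
    push_neg at h
    interval_cases n
    norm_num at hV
  obtain ⟨m, hm, rfl⟩ : ∃ m, 1 ≤ m ∧ n = m + 1 := ⟨n - 1, by omega, by omega⟩
  have h0 : (⟨0, hn⟩ : Fin (m+1)) = 0 := by
    apply Fin.ext
    simp
  obtain ⟨M₀, hM₀, hM₀col⟩ := hex
  rw [h0] at hM₀col
  obtain ⟨u, hu⟩ := exists_unit_col C hC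
  have hcol : ∀ i, M₀ i 0 = (↑u : Matrix (Fin (m+1)) (Fin (m+1)) K) i 0 := fun i => by
    rw [hM₀col i, hu i]
  set V' := Submodule.map (lmulE u⁻¹).toLinearMap V with hV'def
  have fV' : finrank K V' = finrank K V := LinearEquiv.finrank_map_eq (lmulE u⁻¹) V
  have hdim : m ^ 2 - finrank K
      ↥(Submodule.map (πm K m) (V' ⊓ LinearMap.ker (colm K m))) ≤ m - 1 := by
    have hsq : (m+1) ^ 2 = (m+1) * (m+1) := pow_two (m+1)
    have hexp : (m+1) * (m+1) = m*m + 2*m + 1 := by ring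
    have hfle : finrank K V ≤ (m+1) * (m+1) := by
      have := Submodule.finrank_le V
      rwa [finrank_matrix_fin] at this
    have hf : m * m + m + 2 ≤ finrank K V := by
      rw [hsq] at hV
      omega
    have hmle : m ≤ m * m := Nat.le_mul_of_pos_left m hm
    have rn1 := rn_submodule V' (colm K m)
    have rn2 := rn_submodule (V' ⊓ LinearMap.ker (colm K m)) (πm K m)
    have hassoc : finrank K ↥(V' ⊓ LinearMap.ker (colm K m) ⊓ LinearMap.ker (πm K m))
        = finrank K ↥(V' ⊓ (LinearMap.ker (colm K m) ⊓ LinearMap.ker (πm K m))) := by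
      rw [inf_assoc]
    have hFle : finrank K ↥(V' ⊓ (LinearMap.ker (colm K m) ⊓ LinearMap.ker (πm K m))) ≤ m :=
      le_trans (Submodule.finrank_mono inf_le_right) (finrank_F_le m)
    have hsle : finrank K (Submodule.map (colm K m) V') ≤ m + 1 := by
      have := Submodule.finrank_le (Submodule.map (colm K m) V')
      rwa [Module.finrank_pi, Fintype.card_fin] at this
    rw [pow_two]
    omega
  obtain ⟨M, h1, h2, h3⟩ := core (keyL (K := K) m) V X M₀ hM₀ u hcol hdim
  refine ⟨M, h1, h2, fun i => ?_⟩
  rw [h0, h3 i, hu i]
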